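/- Let $R$ be a ring of characteristic $p>0$ multigraded by $\mathbb{Z}^r$, with a Frobenius splitting $\phi$ that is multigraded in the sense that $\phi(R_\lambda) \subseteq R_{\lambda/p}$ (interpreted as $0$ unless $p$ divides each coordinate of $\lambda$). Suppose additionally $R$ is $\mathbb{N}$-graded compatibly, and let $I$ be the 'face ideal' $I = \bigoplus_{n}\bigoplus_{\mu \in P(R), \langle\alpha,\mu\rangle<\beta} R_{n\mu,n}$ associated to a valid inequality $\langle\alpha,\mu\rangle \leq \beta$ of the moment polyhedron $P(R)$. Then $\phi(I) \subseteq I$, i.e. $I$ is compatibly split. -/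

import Mathlib

/-- A multigraded Frobenius splitting compatibly splits face ideals of the moment
polyhedron: let `R` be a ring of characteristic `p`, bigraded by `ℤʳ × ℕ` (over a field
`k`), with a Frobenius splitting `φ` that is multigraded (`φ(R_{λ,s}) ⊆ R_{λ/p,s/p}`,
zero unless `p` divides all degrees).  Then for any valid inequality `⟨α,·⟩ ≤ β` of the
moment polyhedron, the associated face ideal `I` satisfies `φ(I) ⊆ I`. -/
theorem stmt_14 {k R : Type*} [Field k] [CommRing R] [IsDomain R] [IsNoetherianRing R]
    [Algebra k R] {r : ℕ}
    (p : ℕ) [Fact p.Prime] [CharP R p]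
    (𝒜 : (Fin r → ℤ) × ℕ → Submodule k R) [GradedRing 𝒜]
    (φ : R → R)
    (hadd : ∀ a b : R, φ (a + b) = φ a + φ b)
    (hsemi : ∀ a b : R, φ (a ^ p * b) = a * φ b)
    (hone : φ 1 = 1)
    (hgraded : ∀ (lam : Fin r → ℤ) (s : ℕ), ∀ x ∈ 𝒜 (lam, s),
      ((p ∣ s ∧ ∀ i, (p : ℤ) ∣ lam i) →
        φ x ∈ 𝒜 (fun i => lam i / (p : ℤ), s / p)) ∧
      (¬(p ∣ s ∧ ∀ i, (p : ℤ) ∣ lam i) → φ x = 0))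
    (α : Fin r → ℚ) (β : ℚ)
    (hvalid : ∀ (lam : Fin r → ℤ) (s : ℕ), 0 < s → 𝒜 (lam, s) ≠ ⊥ →
      ∑ i, α i * ((lam i : ℚ) / (s : ℚ)) ≤ β)
    (I : Ideal R)
    (hI : I = Ideal.span {x : R | ∃ (lam : Fin r → ℤ) (s : ℕ),
      0 < s ∧ x ∈ 𝒜 (lam, s) ∧ ∑ i, α i * ((lam i : ℚ) / (s : ℚ)) < β}) :
    ∀ x ∈ I, φ x ∈ I := by
  have hp : 0 < p := (Fact.out : p.Prime).pos
  have hpQ : (0 : ℚ) < (p : ℚ) := by exact_mod_cast hp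
  set S : Set R := {x : R | ∃ (lam : Fin r → ℤ) (s : ℕ),
      0 < s ∧ x ∈ 𝒜 (lam, s) ∧ ∑ i, α i * ((lam i : ℚ) / (s : ℚ)) < β} with hS
  subst hI
  -- φ is an additive monoid hom
  have hzero : φ 0 = 0 := by
    have h := hadd 0 0
    rw [add_zero] at h
    exact (left_eq_add.mp h)
  let φ' : R →+ R := AddMonoidHom.mk' φ hadd
  -- validity of the inequality rewritten without division
  have hvalid' : ∀ (lam : Fin r → ℤ) (s : ℕ), 0 < s → 𝒜 (lam, s) ≠ ⊥ →
      ∑ i, α i * (lam i : ℚ) ≤ β * (s : ℚ) := by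
    intro lam s hs hne
    have hsQ : (0 : ℚ) < (s : ℚ) := by exact_mod_cast hs
    have h := hvalid lam s hs hne
    rw [show ∑ i, α i * ((lam i : ℚ) / (s : ℚ)) = (∑ i, α i * (lam i : ℚ)) / (s : ℚ) by
      rw [Finset.sum_div]; exact Finset.sum_congr rfl fun i _ => (mul_div_assoc _ _ _).symm] at h
    calc ∑ i, α i * (lam i : ℚ) = (∑ i, α i * (lam i : ℚ)) / s * s := by
          field_simp
      _ ≤ β * s := by exact mul_le_mul_of_nonneg_right h hsQ.le
  have hnebot : ∀ (lam : Fin r → ℤ) (s : ℕ) (x : R), x ∈ 𝒜 (lam, s) → x ≠ 0 →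
      𝒜 (lam, s) ≠ ⊥ := by
    intro lam s x hx hx0 hbot
    rw [hbot, Submodule.mem_bot] at hx
    exact hx0 hx
  -- the key per-term statement: a homogeneous element times a generator maps into the ideal
  have key : ∀ (μ : Fin r → ℤ) (t : ℕ) (b : R), b ∈ 𝒜 (μ, t) →
      ∀ (lam : Fin r → ℤ) (s : ℕ), 0 < s →
      ∀ g ∈ 𝒜 (lam, s), ∑ i, α i * ((lam i : ℚ) / (s : ℚ)) < β →
      φ (b * g) ∈ Ideal.span S := by
    intro μ t b hb lam s hs g hg hineq
    by_cases hz0 : b * g = 0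
    · rw [hz0, hzero]; exact Submodule.zero_mem _
    have hb0 : b ≠ 0 := fun h => hz0 (by rw [h, zero_mul])
    have hg0 : g ≠ 0 := fun h => hz0 (by rw [h, mul_zero])
    have hsQ : (0 : ℚ) < (s : ℚ) := by exact_mod_cast hs
    -- strict inequality without division
    have hineq' : ∑ i, α i * (lam i : ℚ) < β * (s : ℚ) := by
      rw [show ∑ i, α i * ((lam i : ℚ) / (s : ℚ)) = (∑ i, α i * (lam i : ℚ)) / (s : ℚ) by
        rw [Finset.sum_div]; exact Finset.sum_congr rfl fun i _ => (mul_div_assoc _ _ _).symm] at hineq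
      exact (div_lt_iff₀ hsQ).mp hineq
    -- the product is homogeneous of degree (μ + lam, t + s)
    have hz : b * g ∈ 𝒜 (fun i => μ i + lam i, t + s) := by
      have := SetLike.mul_mem_graded hb hg
      convert this using 2
      rfl
    -- main claim: ⟨α, μ + λ⟩ < β (t + s)
    have claim : ∑ i, α i * ((μ i : ℚ) + (lam i : ℚ)) < β * ((t : ℚ) + (s : ℚ)) := by
      have expand : ∑ i, α i * ((μ i : ℚ) + (lam i : ℚ)) =
          (∑ i, α i * (μ i : ℚ)) + ∑ i, α i * (lam i : ℚ) := by
        rw [← Finset.sum_add_distrib]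
        exact Finset.sum_congr rfl fun i _ => by ring
      rcases Nat.eq_zero_or_pos t with ht0 | ht
      · -- t = 0 : show ⟨α, μ⟩ ≤ 0 using powers of b
        subst ht0
        have hc : ∑ i, α i * (μ i : ℚ) ≤ 0 := by
          by_contra hc
          push_neg at hc
          set c : ℚ := ∑ i, α i * (μ i : ℚ) with hcdef
          obtain ⟨n, hn⟩ := exists_nat_gt ((β * (s : ℚ) - ∑ i, α i * (lam i : ℚ)) / c)
          have hn' : β * (s : ℚ) - ∑ i, α i * (lam i : ℚ) < (n : ℚ) * c :=
            (div_lt_iff₀ hc).mp hn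
          -- b ^ n * g is homogeneous of degree (n μ + λ, s), nonzero
          have hpow : b ^ n ∈ 𝒜 (n • ((μ, 0) : (Fin r → ℤ) × ℕ)) :=
            SetLike.pow_mem_graded n hb
          have hdeg : n • ((μ, 0) : (Fin r → ℤ) × ℕ) + (lam, s) =
              ((fun i => (n : ℤ) * μ i + lam i, s) : (Fin r → ℤ) × ℕ) := by
            refine Prod.ext ?_ ?_
            · funext i
              simp [nsmul_eq_mul]
            · simp
          have hmem : b ^ n * g ∈ 𝒜 ((fun i => (n : ℤ) * μ i + lam i, s)) := by
            rw [← hdeg]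
            exact SetLike.mul_mem_graded hpow hg
          have hne : b ^ n * g ≠ 0 := mul_ne_zero (pow_ne_zero n hb0) hg0
          have hv := hvalid' _ s hs (hnebot _ _ _ hmem hne)
          have hv' : (n : ℚ) * c + ∑ i, α i * (lam i : ℚ) ≤ β * (s : ℚ) := by
            calc (n : ℚ) * c + ∑ i, α i * (lam i : ℚ)
                = ∑ i, α i * (((n : ℤ) * μ i + lam i : ℤ) : ℚ) := by
                  rw [hcdef, Finset.mul_sum, ← Finset.sum_add_distrib]
                  refine Finset.sum_congr rfl fun i _ => ?_
                  push_cast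
                  ring
              _ ≤ β * (s : ℚ) := hv
          linarith
        rw [expand]
        push_cast
        linarith
      · -- t > 0 : b is a nonzero homogeneous element, use validity
        have htQ : (0 : ℚ) < (t : ℚ) := by exact_mod_cast ht
        have hv := hvalid' μ t ht (hnebot _ _ _ hb hb0)
        rw [expand]
        linarith
    -- now split on divisibility of the degree by p
    obtain ⟨hdvd, hndvd⟩ := hgraded _ _ _ hz
    by_cases hd : p ∣ (t + s) ∧ ∀ i, (p : ℤ) ∣ (fun i => μ i + lam i) i
    · have hmem := hdvd hd
      refine Ideal.subset_span ?_
      refine ⟨_, _, ?_, hmem, ?_⟩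
      · exact Nat.div_pos (Nat.le_of_dvd (by omega) hd.1) hp
      · -- the inequality for the divided degree
        have hts : (0 : ℚ) < ((t + s : ℕ) : ℚ) := by
          have : 0 < t + s := by omega
          exact_mod_cast this
        have hcast1 : (((t + s) / p : ℕ) : ℚ) = ((t + s : ℕ) : ℚ) / (p : ℚ) := by
          rw [Nat.cast_div hd.1 (by exact_mod_cast hp.ne')]
        have hcast2 : ∀ i, (((μ i + lam i) / (p : ℤ) : ℤ) : ℚ) =
            ((μ i : ℚ) + (lam i : ℚ)) / (p : ℚ) := by
          intro i
          obtain ⟨c, hc⟩ := hd.2 i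
          have hc' : μ i + lam i = (p : ℤ) * c := hc
          rw [hc', Int.mul_ediv_cancel_left _ (by exact_mod_cast hp.ne')]
          push_cast
          field_simp
          exact_mod_cast (by rw [hc']; ring : c * (p : ℤ) = μ i + lam i)
        have heq : ∀ i, α i * ((((fun i => (μ i + lam i) / (p : ℤ)) i : ℤ) : ℚ) /
              ((((t + s) / p : ℕ)) : ℚ)) =
            α i * (((μ i : ℚ) + (lam i : ℚ)) / ((t + s : ℕ) : ℚ)) := by
          intro i
          rw [hcast1, hcast2 i]
          congr 1
          rw [div_div_div_eq, mul_comm ((p : ℚ)) (((t + s : ℕ) : ℚ)), ← div_div_div_eq]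
          rw [div_self hpQ.ne', div_one]
        rw [Finset.sum_congr rfl fun i _ => heq i]
        rw [show ∑ i, α i * (((μ i : ℚ) + (lam i : ℚ)) / ((t + s : ℕ) : ℚ)) =
            (∑ i, α i * ((μ i : ℚ) + (lam i : ℚ))) / ((t + s : ℕ) : ℚ) by
          rw [Finset.sum_div]; exact Finset.sum_congr rfl fun i _ => (mul_div_assoc _ _ _).symm]
        rw [div_lt_iff₀ hts]
        calc ∑ i, α i * ((μ i : ℚ) + (lam i : ℚ)) < β * ((t : ℚ) + (s : ℚ)) := claim
          _ = β * ((t + s : ℕ) : ℚ) := by push_cast; ring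
    · rw [hndvd hd]
      exact Submodule.zero_mem _
  -- finish: decompose x into a combination of generators, and each coefficient into
  -- homogeneous components
  intro x hx
  rw [Ideal.span, Submodule.mem_span_set] at hx
  obtain ⟨c, hcsupp, hcsum⟩ := hx
  rw [← hcsum]
  rw [Finsupp.sum]
  have : φ (∑ g ∈ c.support, c g • g) = ∑ g ∈ c.support, φ (c g • g) :=
    map_sum φ' _ _
  rw [this]
  refine Submodule.sum_mem _ fun g hgmem => ?_
  obtain ⟨lam, s, hs, hg, hineq⟩ := hcsupp hgmem
  -- decompose the coefficient a := c g into homogeneous components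
  set a : R := c g with ha
  classical
  have hdecomp := DirectSum.sum_support_decompose 𝒜 a
  have : a • g = ∑ j ∈ (DirectSum.decompose 𝒜 a).support,
      ((DirectSum.decompose 𝒜 a j : R) * g) := by
    rw [smul_eq_mul, ← Finset.sum_mul, hdecomp]
  rw [this]
  rw [show φ (∑ j ∈ (DirectSum.decompose 𝒜 a).support, ((DirectSum.decompose 𝒜 a j : R) * g)) =
      ∑ j ∈ (DirectSum.decompose 𝒜 a).support, φ ((DirectSum.decompose 𝒜 a j : R) * g) from
    map_sum φ' _ _]
  refine Submodule.sum_mem _ fun j _ => ?_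
  exact key j.1 j.2 _ (by simpa using (DirectSum.decompose 𝒜 a j).2) lam s hs g hg hineq
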